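/- Consider a two-sender instance over a finite field F with parts P_1, P_2, P_{12}, side-information sets K_i, and eavesdropper set A with A_T = A ∩ P_T, and suppose A ∩ P_{12} = P_{12} (the eavesdropper knows every common message). For j ∈ {1,2} let l*_j be the minimal length of a valid weakly secure single-sender linear code over F for the sub-instance induced on P_j (side-information K_i ∩ P_j for i ∈ P_j, eavesdropper A_j), assumed to exist. Then the optimal two-sender codelength satisfies l* ≥ l*_1 + l*_2. Consequently, if additionally l* ≤ l*_1 + l*_2 (for instance because one of the constructions from sub-codes achieves total length l*_1 + l*_2), then l* = l*_1 + l*_2 and the constructed code is optimal. -/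

import Mathlib

open Matrix Sum

attribute [local instance] Classical.propDecidable

noncomputable section

variable (F : Type*) [Field F] [Fintype F]

/-- The row space of a matrix: the span of its rows. -/
def rowSpace {ρ ι : Type*} (G : Matrix ρ ι F) : Submodule F (ι → F) :=
  Submodule.span F (Set.range fun r j => G r j)

/-- Weak security of the linear code `x ↦ G x` against an eavesdropper knowing `x j` for
`j ∈ A`: for every `i ∉ A` and every `u` supported in `A`, `u + e i` is not in the
row space of `G`. -/
def WeaklySecure {ρ ι : Type*} (G : Matrix ρ ι F) (A : Set ι) : Prop :=
  ∀ i ∉ A, ∀ u : ι → F, (∀ j, u j ≠ 0 → j ∈ A) →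
    u + Pi.single i (1 : F) ∉ rowSpace F G

/-- `G` is a valid index code for side-information sets `K`: every receiver `i` can
decode `x i` from the codeword `G.mulVec x` and its side information `x|_{K i}`. -/
def ValidCode {ρ ι : Type*} [Fintype ι] (K : ι → Set ι) (G : Matrix ρ ι F) : Prop :=
  ∀ i : ι, ∃ D : (ρ → F) → (↥(K i) → F) → F,
    ∀ x : ι → F, D (G.mulVec x) (fun j => x j.1) = x i

/-- `G` has two-sender form for the parts `P1`, `P2`: its rows split into sender-1 rows,
zero on all columns in `P2`, and sender-2 rows, zero on all columns in `P1`. -/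
def TwoSenderForm {ρ ι : Type*} (P1 P2 : Set ι) (G : Matrix ρ ι F) : Prop :=
  ∃ S : Set ρ, (∀ r ∈ S, ∀ j ∈ P2, G r j = 0) ∧ (∀ r ∉ S, ∀ j ∈ P1, G r j = 0)

/-- Achievable lengths of valid weakly secure (single-sender) linear index codes. -/
def oneLens {ι : Type*} [Fintype ι] (K : ι → Set ι) (A : Set ι) : Set ℕ :=
  {l | ∃ G : Matrix (Fin l) ι F, ValidCode F K G ∧ WeaklySecure F G A}

/-- Achievable total lengths of valid weakly secure two-sender linear index codes. -/
def twoLens {ι : Type*} [Fintype ι] (P1 P2 : Set ι) (K : ι → Set ι) (A : Set ι) :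
    Set ℕ :=
  {l | ∃ G : Matrix (Fin l) ι F,
      TwoSenderForm F P1 P2 G ∧ ValidCode F K G ∧ WeaklySecure F G A}

/-- Side-information sets of the sub-instance induced on `S`. -/
def subK {ι : Type*} (K : ι → Set ι) (S : Set ι) : ↥S → Set ↥S :=
  fun i => {j : ↥S | (j : ι) ∈ K (i : ι)}

/-- Extend a matrix with columns indexed by `↥S` to one with columns indexed by `ι`,
filling the new columns with zeros. -/
def extendCols {ρ ι : Type*} (S : Set ι) (G : Matrix ρ ↥S F) : Matrix ρ ι F :=
  Matrix.of fun r => Function.extend (Subtype.val) (G r) (fun _ => 0)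

/-- Zero-pad a matrix with `l` rows to one with `L` rows. -/
def padMat {ι : Type*} (L : ℕ) {l : ℕ} (G : Matrix (Fin l) ι F) : Matrix (Fin L) ι F :=
  Matrix.of fun r j => if h : (r : ℕ) < l then G ⟨(r : ℕ), h⟩ j else 0

set_option linter.unusedSectionVars false

lemma sum_support_subtype {ι : Type*} [Fintype ι] (P : Set ι) (f : ι → F)
    (hf : ∀ j ∉ P, f j = 0) : ∑ j, f j = ∑ j : ↥P, f ↑j := by
  classical
  rw [← Finset.sum_subset (Finset.subset_univ P.toFinset)
      (fun x _ hx => hf x (by simpa using hx))]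
  exact Finset.sum_subtype P.toFinset (fun x => Set.mem_toFinset) f

lemma rowSpace_reindex {ρ ρ' ι : Type*} (e : ρ' ≃ ρ) (G : Matrix ρ ι F) :
    rowSpace F (fun r j => G (e r) j : Matrix ρ' ι F) = rowSpace F G := by
  unfold rowSpace
  congr 1
  exact e.surjective.range_comp fun r j => G r j

lemma validCode_reindex {ρ ρ' ι : Type*} [Fintype ι] (e : ρ' ≃ ρ) (K : ι → Set ι)
    (G : Matrix ρ ι F) (hv : ValidCode F K G) :
    ValidCode F K (fun r j => G (e r) j : Matrix ρ' ι F) := by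
  intro i
  obtain ⟨D, hD⟩ := hv i
  refine ⟨fun c z => D (fun r => c (e.symm r)) z, fun x => ?_⟩
  have h : (fun r => Matrix.mulVec (fun r j => G (e r) j) x (e.symm r)) = G.mulVec x := by
    funext r; simp [Matrix.mulVec]
  show D (fun r => Matrix.mulVec (fun r j => G (e r) j) x (e.symm r)) (fun j => x ↑j) = x i
  rw [h]; exact hD x

lemma weaklySecure_reindex {ρ ρ' ι : Type*} (e : ρ' ≃ ρ) (A : Set ι)
    (G : Matrix ρ ι F) (hs : WeaklySecure F G A) :
    WeaklySecure F (fun r j => G (e r) j : Matrix ρ' ι F) A := by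
  intro i hi u hu
  rw [rowSpace_reindex F e G]
  exact hs i hi u hu

lemma card_mem_oneLens {ι : Type*} [Fintype ι] (K : ι → Set ι) (A : Set ι)
    {ρ : Type*} [Fintype ρ] (G : Matrix ρ ι F)
    (hv : ValidCode F K G) (hs : WeaklySecure F G A) :
    Fintype.card ρ ∈ oneLens F K A := by
  classical
  exact ⟨fun r j => G ((Fintype.equivFin ρ).symm r) j,
    validCode_reindex F _ K G hv, weaklySecure_reindex F _ A G hs⟩

lemma card_mem_twoLens {ι : Type*} [Fintype ι] (P1 P2 : Set ι) (K : ι → Set ι) (A : Set ι)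
    {ρ : Type*} [Fintype ρ] (G : Matrix ρ ι F)
    (ht : TwoSenderForm F P1 P2 G) (hv : ValidCode F K G) (hs : WeaklySecure F G A) :
    Fintype.card ρ ∈ twoLens F P1 P2 K A := by
  classical
  obtain ⟨S, hS, hSc⟩ := ht
  refine ⟨fun r j => G ((Fintype.equivFin ρ).symm r) j,
    ⟨(Fintype.equivFin ρ).symm ⁻¹' S, fun r hr j hj => hS _ hr j hj,
      fun r hr j hj => hSc _ hr j hj⟩,
    validCode_reindex F _ K G hv, weaklySecure_reindex F _ A G hs⟩

lemma not_mem_rowSpace_of_restrict {ι : Type*} [Fintype ι] {ρ : Type*} [Fintype ρ]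
    (G : Matrix ρ ι F) (P A : Set ι) {l : ℕ} (G0 : Matrix (Fin l) ↥P F)
    (hsec : WeaklySecure F G0 (Subtype.val ⁻¹' A))
    (hrows : ∀ r, (fun j : ↥P => G r ↑j) ∈ rowSpace F G0)
    (i : ι) (hiP : i ∈ P) (hiA : i ∉ A) (u : ι → F) (hu : ∀ j, u j ≠ 0 → j ∈ A) :
    u + Pi.single i 1 ∉ rowSpace F G := by
  intro hmem
  rw [rowSpace, Submodule.mem_span_range_iff_exists_fun] at hmem
  obtain ⟨c, hc⟩ := hmem
  have hv : (fun j : ↥P => u ↑j + (Pi.single i (1:F) : ι → F) ↑j) ∈ rowSpace F G0 := by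
    have h : (fun j : ↥P => u ↑j + (Pi.single i (1:F) : ι → F) ↑j)
        = ∑ r, c r • (fun j : ↥P => G r ↑j) := by
      funext j
      have hc' := congrFun hc ↑j
      simp only [Finset.sum_apply, Pi.smul_apply, smul_eq_mul, Pi.add_apply] at hc' ⊢
      exact hc'.symm
    rw [h]
    exact Submodule.sum_mem _ fun r _ => Submodule.smul_mem _ _ (hrows r)
  refine hsec ⟨i, hiP⟩ hiA (fun j => u ↑j) (fun j hj => hu ↑j hj) ?_
  convert hv using 2
  simp [Pi.single_apply, Subtype.ext_iff]

lemma restrict_mem_oneLens {n : ℕ} {l : ℕ} (G : Matrix (Fin l) (Fin n) F)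
    (S : Set (Fin l)) (P Q A : Set (Fin n)) (K : Fin n → Set (Fin n))
    (hPQ : Disjoint P Q)
    (hcov : ∀ j, j ∈ P ∨ j ∈ Q ∨ j ∈ A)
    (hS : ∀ r ∈ S, ∀ j ∈ Q, G r j = 0)
    (hSc : ∀ r ∉ S, ∀ j ∈ P, G r j = 0)
    (hv : ValidCode F K G) (hs : WeaklySecure F G A) :
    Fintype.card ↥S ∈ oneLens F (subK K P) (Subtype.val ⁻¹' A) := by
  classical
  apply card_mem_oneLens F _ _ (fun (r : ↥S) (j : ↥P) => G ↑r ↑j)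
  · -- validity
    intro i
    obtain ⟨D, hD⟩ := hv ↑i
    refine ⟨fun c z => D (fun r => if h : r ∈ S then c ⟨r, h⟩ else 0)
      (fun j => if h : (j : Fin n) ∈ P then z ⟨⟨↑j, h⟩, j.2⟩ else 0), fun x1 => ?_⟩
    let X : Fin n → F := fun j => if h : j ∈ P then x1 ⟨j, h⟩ else 0
    have h1 : (fun r => if h : r ∈ S then
        Matrix.mulVec (fun (r : ↥S) (j : ↥P) => G ↑r ↑j) x1 ⟨r, h⟩ else 0)
        = G.mulVec X := by
      funext r
      by_cases hr : r ∈ S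
      · rw [dif_pos hr]
        show ∑ j : ↥P, G r ↑j * x1 j = ∑ j, G r j * X j
        rw [sum_support_subtype F P (fun j => G r j * X j)
          (fun j hj => by simp [X, dif_neg hj])]
        refine Finset.sum_congr rfl fun j _ => ?_
        simp [X, j.2]
      · rw [dif_neg hr]
        show (0:F) = ∑ j, G r j * X j
        refine (Finset.sum_eq_zero fun j _ => ?_).symm
        by_cases hj : j ∈ P
        · rw [hSc r hr j hj, zero_mul]
        · simp [X, dif_neg hj]
    show D _ _ = x1 i
    rw [h1]
    exact (hD X).trans (by simp [X, i.2])
  · -- security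
    intro i hiA u hu hmem
    unfold rowSpace at hmem; rw [Submodule.mem_span_range_iff_exists_fun] at hmem
    obtain ⟨c, hc⟩ := hmem
    set c' : Fin l → F := fun r => if h : r ∈ S then c ⟨r, h⟩ else 0 with hc'
    set w : Fin n → F := fun j => ∑ r, c' r * G r j with hw
    have hwmem : w ∈ rowSpace F G := by
      have h : w = ∑ r, c' r • (fun j => G r j) := by
        funext j
        simp [hw, Finset.sum_apply]
      rw [h]
      exact Submodule.sum_mem _ fun r _ =>
        Submodule.smul_mem _ _ (Submodule.subset_span ⟨r, rfl⟩)
    have hwP : ∀ j (hj : j ∈ P), w j = u ⟨j, hj⟩ + (if j = (i : Fin n) then (1:F) else 0) := by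
      intro j hj
      have hcj := congrFun hc ⟨j, hj⟩
      simp only [Finset.sum_apply, Pi.smul_apply, smul_eq_mul, Pi.add_apply] at hcj
      have e1 : w j = ∑ r : ↥S, c r * G ↑r j := by
        show (∑ r, c' r * G r j) = _
        rw [sum_support_subtype F S (fun r => c' r * G r j)
          (fun r hr => by simp [hc', dif_neg hr])]
        exact Finset.sum_congr rfl fun r _ => by simp [hc', r.2]
      rw [e1, hcj]
      congr 1
      simp [Pi.single_apply, Subtype.ext_iff]
    have hwQ : ∀ j ∈ Q, w j = 0 := by
      intro j hj
      refine Finset.sum_eq_zero fun r _ => ?_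
      by_cases hr : r ∈ S
      · rw [hS r hr j hj, mul_zero]
      · simp [hc', dif_neg hr]
    refine hs ↑i hiA (w - Pi.single (i : Fin n) 1) ?_ ?_
    · intro j hj
      rcases hcov j with hP | hQ | hA
      · have h2 : (w - Pi.single (i : Fin n) 1 : Fin n → F) j = u ⟨j, hP⟩ := by
          simp only [Pi.sub_apply]
          rw [hwP j hP]
          simp [Pi.single_apply]
        rw [h2] at hj
        exact hu ⟨j, hP⟩ hj
      · exfalso
        apply hj
        have hji : j ≠ (i : Fin n) := by
          intro h
          exact (Set.disjoint_right.mp hPQ hQ) (h ▸ i.2)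
        simp [Pi.sub_apply, hwQ j hQ, Pi.single_apply, hji]
      · exact hA
    · convert hwmem using 2
      funext j
      simp [Pi.single_apply]
      ring

lemma extendCols_apply_mem {ρ ι : Type*} (S : Set ι) (G : Matrix ρ ↥S F) (r : ρ) (j : ↥S) :
    extendCols F S G r ↑j = G r j := by
  show Function.extend Subtype.val (G r) (fun _ => 0) ↑j = G r j
  exact Subtype.val_injective.extend_apply _ _ j

lemma extendCols_apply_notMem {ρ ι : Type*} (S : Set ι) (G : Matrix ρ ↥S F) (r : ρ)
    {j : ι} (hj : j ∉ S) : extendCols F S G r j = 0 := by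
  show Function.extend Subtype.val (G r) (fun _ => 0) j = 0
  refine Function.extend_apply' _ _ _ ?_
  rintro ⟨a, rfl⟩
  exact hj a.2

def combMat {n : ℕ} (P1 P2 P12 : Set (Fin n)) {l1 l2 : ℕ}
    (G1 : Matrix (Fin l1) ↥P1 F) (G2 : Matrix (Fin l2) ↥P2 F) :
    Matrix ((Fin l1 ⊕ ↥P12) ⊕ Fin l2) (Fin n) F := fun r j =>
  match r with
  | .inl (.inl r) => extendCols F P1 G1 r j
  | .inl (.inr i) => if j = (i : Fin n) then 1 else 0
  | .inr r => extendCols F P2 G2 r j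

lemma combine_twoLens_nonempty {n : ℕ} (P1 P2 P12 : Set (Fin n))
    (h12 : Disjoint P1 P2) (h112 : Disjoint P1 P12) (h212 : Disjoint P2 P12)
    (hcov : P1 ∪ P2 ∪ P12 = Set.univ)
    (K : Fin n → Set (Fin n)) (A : Set (Fin n)) (hA12 : P12 ⊆ A)
    {l1 l2 : ℕ} (G1 : Matrix (Fin l1) ↥P1 F) (G2 : Matrix (Fin l2) ↥P2 F)
    (hv1 : ValidCode F (subK K P1) G1) (hs1 : WeaklySecure F G1 (Subtype.val ⁻¹' A))
    (hv2 : ValidCode F (subK K P2) G2) (hs2 : WeaklySecure F G2 (Subtype.val ⁻¹' A)) :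
    (twoLens F P1 P2 K A).Nonempty := by
  classical
  refine ⟨_, card_mem_twoLens F P1 P2 K A (combMat F P1 P2 P12 G1 G2) ?_ ?_ ?_⟩
  · -- TwoSenderForm
    refine ⟨Set.range Sum.inl, ?_, ?_⟩
    · rintro r ⟨a, rfl⟩ j hj
      match a with
      | .inl r => exact extendCols_apply_notMem F P1 G1 r (Set.disjoint_right.mp h12 hj)
      | .inr i' =>
        show (if j = (i' : Fin n) then (1:F) else 0) = 0
        rw [if_neg]
        intro hEq
        exact (Set.disjoint_left.mp h212 hj) (hEq ▸ i'.2)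
    · intro r hr j hj
      match r with
      | .inl a => exact absurd ⟨a, rfl⟩ hr
      | .inr r => exact extendCols_apply_notMem F P2 G2 r (Set.disjoint_left.mp h12 hj)
  · -- ValidCode
    intro i
    have hi : i ∈ P1 ∪ P2 ∪ P12 := by rw [hcov]; trivial
    rcases hi with (h1i | h2i) | h12i
    · obtain ⟨D1, hD1⟩ := hv1 ⟨i, h1i⟩
      refine ⟨fun c z => D1 (fun r => c (Sum.inl (Sum.inl r))) (fun j => z ⟨↑↑j, j.2⟩),
        fun x => ?_⟩
      have e1 : (fun r => Matrix.mulVec (combMat F P1 P2 P12 G1 G2) x (Sum.inl (Sum.inl r)))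
          = G1.mulVec (fun j : ↥P1 => x ↑j) := by
        funext r
        show ∑ j, extendCols F P1 G1 r j * x j = ∑ j : ↥P1, G1 r j * x ↑j
        rw [sum_support_subtype F P1 (fun j => extendCols F P1 G1 r j * x j)
          (fun j hj => by show extendCols F P1 G1 r j * x j = 0; rw [extendCols_apply_notMem F P1 G1 r hj, zero_mul])]
        exact Finset.sum_congr rfl fun j _ => by rw [extendCols_apply_mem]
      show D1 (fun r => Matrix.mulVec (combMat F P1 P2 P12 G1 G2) x (Sum.inl (Sum.inl r)))
        (fun j => x ↑↑j) = x i
      rw [e1]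
      exact hD1 fun j => x ↑j
    · obtain ⟨D2, hD2⟩ := hv2 ⟨i, h2i⟩
      refine ⟨fun c z => D2 (fun r => c (Sum.inr r)) (fun j => z ⟨↑↑j, j.2⟩),
        fun x => ?_⟩
      have e2 : (fun r => Matrix.mulVec (combMat F P1 P2 P12 G1 G2) x (Sum.inr r))
          = G2.mulVec (fun j : ↥P2 => x ↑j) := by
        funext r
        show ∑ j, extendCols F P2 G2 r j * x j = ∑ j : ↥P2, G2 r j * x ↑j
        rw [sum_support_subtype F P2 (fun j => extendCols F P2 G2 r j * x j)
          (fun j hj => by show extendCols F P2 G2 r j * x j = 0; rw [extendCols_apply_notMem F P2 G2 r hj, zero_mul])]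
        exact Finset.sum_congr rfl fun j _ => by rw [extendCols_apply_mem]
      show D2 (fun r => Matrix.mulVec (combMat F P1 P2 P12 G1 G2) x (Sum.inr r))
        (fun j => x ↑↑j) = x i
      rw [e2]
      exact hD2 fun j => x ↑j
    · refine ⟨fun c _ => c (Sum.inl (Sum.inr ⟨i, h12i⟩)), fun x => ?_⟩
      show ∑ j, (if j = i then (1:F) else 0) * x j = x i
      simp [ite_mul]
  · -- WeaklySecure
    have hrows1 : ∀ r, (fun j : ↥P1 => combMat F P1 P2 P12 G1 G2 r ↑j) ∈ rowSpace F G1 := by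
      intro r
      match r with
      | .inl (.inl r) =>
        have h : (fun j : ↥P1 => combMat F P1 P2 P12 G1 G2 (Sum.inl (Sum.inl r)) ↑j)
            = fun j => G1 r j := by
          funext j; exact extendCols_apply_mem F P1 G1 r j
        rw [h]; exact Submodule.subset_span ⟨r, rfl⟩
      | .inl (.inr i') =>
        have h : (fun j : ↥P1 => combMat F P1 P2 P12 G1 G2 (Sum.inl (Sum.inr i')) ↑j)
            = 0 := by
          funext j
          show (if (↑j : Fin n) = (i' : Fin n) then (1:F) else 0) = 0
          rw [if_neg]
          intro hEq
          exact (Set.disjoint_left.mp h112 j.2) (hEq ▸ i'.2)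
        rw [h]; exact Submodule.zero_mem _
      | .inr r =>
        have h : (fun j : ↥P1 => combMat F P1 P2 P12 G1 G2 (Sum.inr r) ↑j) = 0 := by
          funext j
          exact extendCols_apply_notMem F P2 G2 r (Set.disjoint_left.mp h12 j.2)
        rw [h]; exact Submodule.zero_mem _
    have hrows2 : ∀ r, (fun j : ↥P2 => combMat F P1 P2 P12 G1 G2 r ↑j) ∈ rowSpace F G2 := by
      intro r
      match r with
      | .inl (.inl r) =>
        have h : (fun j : ↥P2 => combMat F P1 P2 P12 G1 G2 (Sum.inl (Sum.inl r)) ↑j) = 0 := by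
          funext j
          exact extendCols_apply_notMem F P1 G1 r (Set.disjoint_right.mp h12 j.2)
        rw [h]; exact Submodule.zero_mem _
      | .inl (.inr i') =>
        have h : (fun j : ↥P2 => combMat F P1 P2 P12 G1 G2 (Sum.inl (Sum.inr i')) ↑j)
            = 0 := by
          funext j
          show (if (↑j : Fin n) = (i' : Fin n) then (1:F) else 0) = 0
          rw [if_neg]
          intro hEq
          exact (Set.disjoint_left.mp h212 j.2) (hEq ▸ i'.2)
        rw [h]; exact Submodule.zero_mem _
      | .inr r =>
        have h : (fun j : ↥P2 => combMat F P1 P2 P12 G1 G2 (Sum.inr r) ↑j)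
            = fun j => G2 r j := by
          funext j; exact extendCols_apply_mem F P2 G2 r j
        rw [h]; exact Submodule.subset_span ⟨r, rfl⟩
    intro i hiA u hu
    have hi : i ∈ P1 ∪ P2 ∪ P12 := by rw [hcov]; trivial
    rcases hi with (h1i | h2i) | h12i
    · exact not_mem_rowSpace_of_restrict F _ P1 A G1 hs1 hrows1 i h1i hiA u hu
    · exact not_mem_rowSpace_of_restrict F _ P2 A G2 hs2 hrows2 i h2i hiA u hu
    · exact (hiA (hA12 h12i)).elim

lemma card_set_add_card_compl {α : Type*} [Fintype α] (S : Set α)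
    (i1 : Fintype ↥S) (i2 : Fintype ↥(Sᶜ)) :
    @Fintype.card _ i1 + @Fintype.card _ i2 = Fintype.card α := by
  classical
  have h1 : @Fintype.card _ i1 = Fintype.card ↥S := by congr 1
  have h2 : @Fintype.card _ i2 = Fintype.card ↥(Sᶜ) := by congr 1
  rw [h1, h2]
  have hc := Fintype.card_congr (Equiv.Set.sumCompl S)
  rw [Fintype.card_sum] at hc
  convert hc using 2

/-- Theorem 7 of the paper.  If the eavesdropper knows every common
message (`P12 ⊆ A`), then the optimal total length of a valid weakly secure two-sender
linear code is at least `l*₁ + l*₂`, the sum of the optimal lengths for the sub-instances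
induced on `P1` and `P2`; consequently if moreover `l* ≤ l*₁ + l*₂` (e.g. because some
construction from sub-codes achieves this total length) then `l* = l*₁ + l*₂` and the
constructed code is optimal. -/
theorem opt_twoSender_ge_add_of_eaves_knows_common {m : ℕ}
    (P1 P2 P12 : Set (Fin m))
    (h12 : Disjoint P1 P2) (h112 : Disjoint P1 P12) (h212 : Disjoint P2 P12)
    (hcov : P1 ∪ P2 ∪ P12 = Set.univ)
    (K : Fin m → Set (Fin m)) (hK : ∀ i, i ∉ K i)
    (A : Set (Fin m)) (hA : A ⊂ Set.univ) (hA12 : P12 ⊆ A)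
    (h1 : (oneLens F (subK K P1) (Subtype.val ⁻¹' A)).Nonempty)
    (h2 : (oneLens F (subK K P2) (Subtype.val ⁻¹' A)).Nonempty) :
    sInf (oneLens F (subK K P1) (Subtype.val ⁻¹' A)) +
        sInf (oneLens F (subK K P2) (Subtype.val ⁻¹' A)) ≤
      sInf (twoLens F P1 P2 K A) ∧
    (sInf (twoLens F P1 P2 K A) ≤
        sInf (oneLens F (subK K P1) (Subtype.val ⁻¹' A)) +
          sInf (oneLens F (subK K P2) (Subtype.val ⁻¹' A)) →
      sInf (twoLens F P1 P2 K A) =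
        sInf (oneLens F (subK K P1) (Subtype.val ⁻¹' A)) +
          sInf (oneLens F (subK K P2) (Subtype.val ⁻¹' A))) := by
  classical
  obtain ⟨l1w, G1w, hv1w, hs1w⟩ := h1
  obtain ⟨l2w, G2w, hv2w, hs2w⟩ := h2
  have hne : (twoLens F P1 P2 K A).Nonempty :=
    combine_twoLens_nonempty F P1 P2 P12 h12 h112 h212 hcov K A hA12 G1w G2w
      hv1w hs1w hv2w hs2w
  obtain ⟨G, ⟨S, hSa, hSb⟩, hv, hs⟩ := Nat.sInf_mem hne
  have cov1 : ∀ j, j ∈ P1 ∨ j ∈ P2 ∨ j ∈ A := by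
    intro j
    have hj : j ∈ P1 ∪ P2 ∪ P12 := by rw [hcov]; trivial
    rcases hj with (h | h) | h
    exacts [Or.inl h, Or.inr (Or.inl h), Or.inr (Or.inr (hA12 h))]
  have cov2 : ∀ j, j ∈ P2 ∨ j ∈ P1 ∨ j ∈ A := by
    intro j
    rcases cov1 j with h | h | h
    exacts [Or.inr (Or.inl h), Or.inl h, Or.inr (Or.inr h)]
  have m1 := restrict_mem_oneLens F G S P1 P2 A K h12 cov1 hSa hSb hv hs
  have m2 := restrict_mem_oneLens F G Sᶜ P2 P1 A K h12.symm cov2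
    (fun r hr j hj => hSb r hr j hj)
    (fun r hr j hj => hSa r (not_not.mp hr) j hj) hv hs
  have hle : sInf (oneLens F (subK K P1) (Subtype.val ⁻¹' A)) +
      sInf (oneLens F (subK K P2) (Subtype.val ⁻¹' A)) ≤ sInf (twoLens F P1 P2 K A) := by
    refine le_trans (add_le_add (Nat.sInf_le m1) (Nat.sInf_le m2)) (le_of_eq ?_)
    exact (card_set_add_card_compl S _ _).trans (Fintype.card_fin _)
  exact ⟨hle, fun h => le_antisymm h hle⟩
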